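/- arXiv:0904.2273 — 2 statements merged into one kernel-verified Lean document; each statement's English description precedes it below -/
import Mathlib

section
/- Let R be a PVMD, I a t-ideal of R, {P_α} the set of minimal prime ideals of I, and {M_β} the set of t-maximal ideals of R that do not contain I. For each α, let Q_α be the unique prime ideal determined by ⋂_{n≥1} IⁿR_{P_α} = Q_α R_{P_α}. Then: (1) T(I) ⊆ (⋂_α R_{Q_α}) ∩ (⋂_β R_{M_β}); and (2) if I has only finitely many minimal primes, equality holds. -/
/-!
Common definitions: star operations (`v`- and `t`-closure), `t`-ideals, `t`-invertibility,
PVMDs, overrings, `t`-linked and `t`-flat overrings, localizations inside the quotient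
field, Nagata and Kaplansky transforms, endomorphism rings of ideals.
-/

open scoped Classical

namespace PVMDPaper

noncomputable section

section Generic

variable (A : Type*) [CommRing A] (K : Type*) [Field K] [Algebra A K]

/-- The image of an integral ideal of `A` inside the field `K`, as an `A`-submodule of `K`. -/
def toK (I : Ideal A) : Submodule A K := Submodule.map (Algebra.linearMap A K) I

variable {A K}

/-- The dual `I⁻¹ = (A : I) = {x ∈ K : x I ⊆ A}` of a submodule of `K`. -/
def dual (I : Submodule A K) : Submodule A K := 1 / I

/-- The `v`-closure `I_v = (I⁻¹)⁻¹`. -/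
def vOp (I : Submodule A K) : Submodule A K := 1 / (1 / I)

/-- The `t`-closure `I_t`: the union of `J_v` where `J` ranges over the nonzero finitely
generated submodules `J ≤ I` (the union of this directed family is its supremum). -/
def tOp (I : Submodule A K) : Submodule A K :=
  sSup {V | ∃ J : Submodule A K, J ≠ ⊥ ∧ J.FG ∧ J ≤ I ∧ V = vOp J}

variable (K)

/-- An (integral) ideal `I` of `A` is a `t`-ideal if `I = I_t`. -/
def IsTIdeal (I : Ideal A) : Prop := tOp (toK A K I) = toK A K I

/-- An ideal `I` is `t`-invertible if `(I I⁻¹)_t = A`. -/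
def IsTInvertible (I : Ideal A) : Prop := tOp (toK A K I * dual (toK A K I)) = 1

/-- A `t`-maximal ideal: an ideal maximal in the set of proper integral `t`-ideals. -/
def IsTMaximal (M : Ideal A) : Prop :=
  M ≠ ⊤ ∧ IsTIdeal K M ∧ ∀ J : Ideal A, J ≠ ⊤ → IsTIdeal K J → M ≤ J → J = M

variable (A)

/-- `A` is a Prüfer `v`-multiplication domain: every nonzero finitely generated ideal
is `t`-invertible. -/
def IsPVMD : Prop := ∀ I : Ideal A, I ≠ ⊥ → I.FG → IsTInvertible K I

/-- `Spec_t(A)` is Noetherian: the ascending chain condition on radical `t`-ideals. -/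
def TSpecNoetherian : Prop :=
  ∀ f : ℕ →o Ideal A, (∀ n, IsTIdeal K (f n) ∧ (f n).radical = f n) →
    ∃ n, ∀ m, n ≤ m → f m = f n

variable {A K}

/-- A submodule of `K` is a subring of `K` iff it contains `1` and is closed under
multiplication (being an additive subgroup already). -/
def IsSubringOf (S : Submodule A K) : Prop :=
  (1 : K) ∈ S ∧ ∀ x ∈ S, ∀ y ∈ S, x * y ∈ S

variable (K)

/-- The localization `A_P = {a/s : a ∈ A, s ∈ A ∖ P}` viewed as a subset of `K`. -/
def loc (P : Ideal A) : Set K :=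
  {x | ∃ a s : A, s ∉ P ∧ x * algebraMap A K s = algebraMap A K a}

/-- The set `J A_P = {a/s : a ∈ J, s ∈ A ∖ P} ⊆ K`. -/
def locIdealAt (J P : Ideal A) : Set K :=
  {x | ∃ a ∈ J, ∃ s : A, s ∉ P ∧ x * algebraMap A K s = algebraMap A K a}

/-- `Z(A, I)`: the set of zero divisors on `A/I`. -/
def ZSet (I : Ideal A) : Set A := {x | ∃ a : A, a ∉ I ∧ x * a ∈ I}

/-- `Q` is a maximal prime ideal of `Z(A,I)`: a prime contained in `Z(A,I)`, maximal
(under inclusion) among the primes contained in `Z(A,I)`. -/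
def MaxPrimeOfZ (I Q : Ideal A) : Prop :=
  Q.IsPrime ∧ (Q : Set A) ⊆ ZSet I ∧
    ∀ Q' : Ideal A, Q'.IsPrime → (Q' : Set A) ⊆ ZSet I → Q ≤ Q' → Q' = Q

end Generic

section Overring

variable {R : Type*} [CommRing R] [IsDomain R]
variable {K : Type*} [Field K] [Algebra R K] [IsFractionRing R K]

/-- The extension `IT` of an ideal `I` of `R` to an overring `T`, as a `T`-submodule of `K`. -/
def extendI (I : Ideal R) (T : Subalgebra R K) : Submodule T K :=
  Submodule.span T (algebraMap R K '' (I : Set R))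

/-- The extension `IT` of an `R`-submodule `I` of `K` to an overring `T`. -/
def extendS (I : Submodule R K) (T : Subalgebra R K) : Submodule T K :=
  Submodule.span T (I : Set K)

/-- An overring `T` of `R` is `t`-linked over `R` if `(IT)⁻¹ = T` for each finitely
generated ideal `I` of `R` with `I⁻¹ = R`. -/
def IsTLinked (T : Subalgebra R K) : Prop :=
  ∀ I : Ideal R, I.FG → dual (toK R K I) = 1 → dual (extendI I T) = 1

/-- An overring `T` of `R` is `t`-flat over `R` if `T_M = R_{M ∩ R}` for each
`t`-maximal ideal `M` of `T`. -/
def IsTFlat (T : Subalgebra R K) : Prop :=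
  ∀ M : Ideal T, IsTMaximal K M → loc K M = loc K (M.comap (algebraMap R T))

variable (R K)

/-- `R` is a `tQR`-domain: a PVMD all of whose `t`-linked overrings are localizations
of `R` at multiplicative sets. -/
def IsTQR : Prop :=
  IsPVMD R K ∧ ∀ T : Subalgebra R K, IsTLinked T → ∃ S : Submonoid R,
    (T : Set K) = {x | ∃ a : R, ∃ s ∈ S, x * algebraMap R K s = algebraMap R K a}

variable {R K}
variable (K)

/-- The endomorphism ring `(I : I) = {x ∈ K : x I ⊆ I}` of an ideal `I`, as an
overring of `R`. -/
def endoRing (I : Ideal R) : Subalgebra R K where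
  carrier := {x : K | ∀ y ∈ toK R K I, x * y ∈ toK R K I}
  mul_mem' := by
    intro a b ha hb y hy
    rw [mul_assoc]
    exact ha _ (hb _ hy)
  one_mem' := by
    intro y hy
    rwa [one_mul]
  add_mem' := by
    intro a b ha hb y hy
    rw [add_mul]
    exact Submodule.add_mem _ (ha y hy) (hb y hy)
  zero_mem' := by
    intro y hy
    rw [zero_mul]
    exact Submodule.zero_mem _
  algebraMap_mem' := by
    intro r y hy
    rw [← Algebra.smul_def]
    exact Submodule.smul_mem _ r hy

set_option synthInstance.maxHeartbeats 400000 in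
/-- The ideal `I`, viewed as an ideal of its endomorphism ring `(I : I)`. -/
def idealInEndo (I : Ideal R) : Ideal (endoRing K I) where
  carrier := {x | (x : K) ∈ toK R K I}
  add_mem' := by
    intro a b ha hb
    simp only [Set.mem_setOf_eq] at *
    rw [AddMemClass.coe_add]
    exact Submodule.add_mem _ ha hb
  zero_mem' := by
    simp only [Set.mem_setOf_eq, ZeroMemClass.coe_zero]
    exact Submodule.zero_mem _
  smul_mem' := by
    intro c x hx
    simp only [Set.mem_setOf_eq] at *
    rw [smul_eq_mul, MulMemClass.coe_mul]
    exact c.2 _ hx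

/-- The Kaplansky transform `Ω(I) = {u ∈ K : ∀ a ∈ I, ∃ n ≥ 1, u aⁿ ∈ R}`, as an
overring of `R`. -/
def kaplansky (I : Ideal R) : Subalgebra R K where
  carrier := {u : K | ∀ a ∈ I, ∃ n : ℕ, 0 < n ∧
    ∃ r : R, u * (algebraMap R K a) ^ n = algebraMap R K r}
  mul_mem' := by
    intro u v hu hv a ha
    obtain ⟨n, hn, r, hr⟩ := hu a ha
    obtain ⟨m, hm, s, hs⟩ := hv a ha
    refine ⟨n + m, by omega, r * s, ?_⟩
    rw [map_mul, ← hr, ← hs, pow_add]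
    ring
  one_mem' := by
    intro a ha
    exact ⟨1, one_pos, a, by rw [pow_one, one_mul]⟩
  add_mem' := by
    intro u v hu hv a ha
    obtain ⟨n, hn, r, hr⟩ := hu a ha
    obtain ⟨m, hm, s, hs⟩ := hv a ha
    refine ⟨n + m, by omega, r * a ^ m + s * a ^ n, ?_⟩
    rw [map_add, map_mul, map_mul, map_pow, map_pow, ← hr, ← hs, pow_add, add_mul]
    ring
  zero_mem' := by
    intro a ha
    exact ⟨1, one_pos, 0, by rw [map_zero, zero_mul]⟩
  algebraMap_mem' := by
    intro r a ha
    exact ⟨1, one_pos, r * a, by rw [map_mul, pow_one]⟩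

/-- The Nagata (ideal) transform `T(I) = ⋃_{n ≥ 1} (R : Iⁿ)`, as an overring of `R`. -/
def nagata (I : Ideal R) : Subalgebra R K where
  carrier := {x : K | ∃ n : ℕ, ∀ y ∈ I ^ (n + 1),
    ∃ r : R, x * algebraMap R K y = algebraMap R K r}
  mul_mem' := by
    intro x x' hx hx'
    obtain ⟨n, hn⟩ := hx
    obtain ⟨m, hm⟩ := hx'
    refine ⟨n + m + 1, fun y hy => ?_⟩
    rw [show n + m + 1 + 1 = (n + 1) + (m + 1) by omega, pow_add] at hy
    refine Submodule.mul_induction_on hy ?_ ?_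
    · intro a ha b hb
      obtain ⟨r, hr⟩ := hn a ha
      obtain ⟨s, hs⟩ := hm b hb
      refine ⟨r * s, ?_⟩
      rw [map_mul, map_mul, ← hr, ← hs]
      ring
    · rintro y1 y2 ⟨r1, h1⟩ ⟨r2, h2⟩
      exact ⟨r1 + r2, by rw [map_add, map_add, mul_add, h1, h2]⟩
  one_mem' := ⟨0, fun y _ => ⟨y, by rw [one_mul]⟩⟩
  add_mem' := by
    intro x x' hx hx'
    obtain ⟨n, hn⟩ := hx
    obtain ⟨m, hm⟩ := hx'
    refine ⟨n + m + 1, fun y hy => ?_⟩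
    have h1 : y ∈ I ^ (n + 1) := Ideal.pow_le_pow_right (by omega) hy
    have h2 : y ∈ I ^ (m + 1) := Ideal.pow_le_pow_right (by omega) hy
    obtain ⟨r, hr⟩ := hn y h1
    obtain ⟨s, hs⟩ := hm y h2
    exact ⟨r + s, by rw [map_add, add_mul, hr, hs]⟩
  zero_mem' := ⟨0, fun y _ => ⟨0, by rw [map_zero, zero_mul]⟩⟩
  algebraMap_mem' := by
    intro r
    exact ⟨0, fun y _ => ⟨r * y, by rw [map_mul]⟩⟩

end Overring

section Statements

variable {R : Type*} [CommRing R] [IsDomain R]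
variable {K : Type*} [Field K] [Algebra R K] [IsFractionRing R K]

set_option linter.unusedSectionVars false
set_option linter.unusedVariables false

section AuxLemmas

variable {R : Type*} [CommRing R] [IsDomain R]
variable {K : Type*} [Field K] [Algebra R K] [IsFractionRing R K]

theorem aux_inj : Function.Injective (algebraMap R K) := IsFractionRing.injective R K

theorem mem_toK {I : Ideal R} {z : K} :
    z ∈ toK R K I ↔ ∃ r ∈ I, algebraMap R K r = z := by
  simp [toK, Submodule.mem_map, Algebra.linearMap_apply]

theorem toK_le_one {I : Ideal R} : toK R K I ≤ (1 : Submodule R K) := by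
  intro z hz
  obtain ⟨r, -, rfl⟩ := mem_toK.mp hz
  exact Submodule.mem_one.mpr ⟨r, rfl⟩

theorem toK_mono {I J : Ideal R} (h : I ≤ J) : toK R K I ≤ toK R K J :=
  Submodule.map_mono h

theorem mem_toK_self {I : Ideal R} {r : R} (hr : r ∈ I) :
    algebraMap R K r ∈ toK R K I := mem_toK.mpr ⟨r, hr, rfl⟩

theorem mem_toK_iff {I : Ideal R} {r : R} :
    algebraMap R K r ∈ toK R K I ↔ r ∈ I := by
  refine ⟨fun h => ?_, mem_toK_self⟩
  obtain ⟨s, hs, hsr⟩ := mem_toK.mp h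
  rwa [← aux_inj hsr]

theorem mem_div_one {S : Submodule R K} {z : K} :
    z ∈ (1 : Submodule R K) / S ↔ ∀ y ∈ S, z * y ∈ (1 : Submodule R K) :=
  Submodule.mem_div_iff_forall_mul_mem

theorem one_div_antitone {S T : Submodule R K} (h : S ≤ T) :
    (1 : Submodule R K) / T ≤ 1 / S := fun z hz =>
  mem_div_one.mpr fun y hy => mem_div_one.mp hz y (h hy)

theorem le_vOp {S : Submodule R K} : S ≤ vOp S := by
  intro z hz
  exact mem_div_one.mpr fun y hy => by
    rw [mul_comm]; exact mem_div_one.mp hy z hz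

theorem vOp_mono {S T : Submodule R K} (h : S ≤ T) : vOp S ≤ vOp T :=
  one_div_antitone (one_div_antitone h)

theorem one_div_one : (1 : Submodule R K) / 1 = 1 := by
  refine le_antisymm (fun z hz => ?_) (fun z hz => mem_div_one.mpr fun y hy => ?_)
  · simpa using mem_div_one.mp hz 1 (Submodule.one_le.mp le_rfl)
  · obtain ⟨r, rfl⟩ := Submodule.mem_one.mp hz
    obtain ⟨s, rfl⟩ := Submodule.mem_one.mp hy
    exact Submodule.mem_one.mpr ⟨r * s, by rw [map_mul]⟩

theorem vOp_one : vOp (1 : Submodule R K) = 1 := by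
  rw [vOp, one_div_one, one_div_one]

theorem vOp_le_one {S : Submodule R K} (h : S ≤ 1) : vOp S ≤ 1 :=
  (vOp_mono h).trans vOp_one.le

theorem one_div_one_div_one_div (S : Submodule R K) :
    (1 : Submodule R K) / (1 / (1 / S)) = 1 / S :=
  le_antisymm (one_div_antitone (le_vOp (S := S))) (le_vOp (S := 1 / S))

theorem vOp_vOp (S : Submodule R K) : vOp (vOp S) = vOp S := by
  show (1 : Submodule R K) / (1 / (1 / (1 / S))) = 1 / (1 / S)
  rw [one_div_one_div_one_div]

theorem vOp_le_tOp {S J : Submodule R K} (hJ : J ≠ ⊥) (hfg : J.FG) (hle : J ≤ S) :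
    vOp J ≤ tOp S := le_sSup ⟨J, hJ, hfg, hle, rfl⟩

theorem le_tOp {S : Submodule R K} : S ≤ tOp S := by
  intro z hz
  by_cases h0 : z = 0
  · subst h0; exact Submodule.zero_mem _
  have hne : Submodule.span R {z} ≠ ⊥ := by
    simpa [Submodule.span_singleton_eq_bot] using h0
  exact vOp_le_tOp hne (Submodule.fg_span_singleton z)
    ((Submodule.span_singleton_le_iff_mem z S).mpr hz)
    (le_vOp (Submodule.mem_span_singleton_self z))

theorem tOp_le {S T : Submodule R K}
    (h : ∀ J : Submodule R K, J ≠ ⊥ → J.FG → J ≤ S → vOp J ≤ T) : tOp S ≤ T :=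
  sSup_le (by rintro V ⟨J, h1, h2, h3, rfl⟩; exact h J h1 h2 h3)

theorem tOp_mono {S T : Submodule R K} (h : S ≤ T) : tOp S ≤ tOp T :=
  tOp_le fun J h1 h2 h3 => vOp_le_tOp h1 h2 (h3.trans h)

theorem tOp_le_one {S : Submodule R K} (h : S ≤ 1) : tOp S ≤ 1 :=
  tOp_le fun _J _ _ h3 => vOp_le_one (h3.trans h)

theorem mem_tOp {S : Submodule R K} {z : K} (hz : z ∈ tOp S) (h0 : z ≠ 0) :
    ∃ J : Submodule R K, J ≠ ⊥ ∧ J.FG ∧ J ≤ S ∧ z ∈ vOp J := by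
  classical
  set 𝒮 := {V | ∃ J : Submodule R K, J ≠ ⊥ ∧ J.FG ∧ J ≤ S ∧ V = vOp J} with h𝒮
  rcases Set.eq_empty_or_nonempty 𝒮 with he | hne
  · exfalso
    rw [tOp, ← h𝒮, he, sSup_empty] at hz
    exact h0 (Submodule.mem_bot R |>.mp hz)
  have hdir : DirectedOn (· ≤ ·) 𝒮 := by
    rintro V1 ⟨J1, hb1, hf1, hl1, rfl⟩ V2 ⟨J2, hb2, hf2, hl2, rfl⟩
    refine ⟨vOp (J1 ⊔ J2), ⟨J1 ⊔ J2, ?_, hf1.sup hf2, sup_le hl1 hl2, rfl⟩,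
      vOp_mono le_sup_left, vOp_mono le_sup_right⟩
    intro hb; rw [← le_bot_iff] at hb; exact hb1 (le_bot_iff.mp (le_sup_left.trans hb))
  obtain ⟨V, hV, hzV⟩ := (Submodule.mem_sSup_of_directed hne hdir).mp hz
  obtain ⟨J, h1, h2, h3, rfl⟩ := hV
  exact ⟨J, h1, h2, h3, hzV⟩

theorem tOp_tOp {S : Submodule R K} : tOp (tOp S) = tOp S := by
  refine le_antisymm (tOp_le fun J hJ hfg hle => ?_) (tOp_mono le_tOp)
  have hcomp := (CompleteLattice.isCompactElement_iff_exists_le_sSup_of_le_sSup (Submodule R K) J).mp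
    ((Submodule.fg_iff_compact J).mp hfg)
  obtain ⟨t, ht, hJt⟩ := hcomp _ hle
  have key : ∀ u : Finset (Submodule R K),
      (↑u ⊆ {V | ∃ J' : Submodule R K, J' ≠ ⊥ ∧ J'.FG ∧ J' ≤ S ∧ V = vOp J'}) →
      u.sup id = ⊥ ∨ ∃ J' : Submodule R K, J' ≠ ⊥ ∧ J'.FG ∧ J' ≤ S ∧ u.sup id ≤ vOp J' := by
    intro u
    induction u using Finset.induction_on with
    | empty => intro _; left; simp
    | @insert V u _hV ih =>
      intro hsub
      obtain ⟨JV, hb, hf, hl, rfl⟩ := hsub (Finset.mem_insert_self V u)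
      rcases ih (fun W hW => hsub (Finset.mem_insert_of_mem hW)) with h | ⟨J', hb', hf', hl', hle'⟩
      · right
        refine ⟨JV, hb, hf, hl, ?_⟩
        rw [Finset.sup_insert, h, sup_bot_eq]; exact le_rfl
      · right
        refine ⟨JV ⊔ J', fun hbb => hb ?_, hf.sup hf', sup_le hl hl', ?_⟩
        · rw [← le_bot_iff] at hbb ⊢; exact le_sup_left.trans hbb
        · rw [Finset.sup_insert]
          exact sup_le ((vOp_mono le_sup_left)) (hle'.trans (vOp_mono le_sup_right))
  rcases key t ht with h | ⟨J', hb', hf', hl', hle'⟩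
  · exact absurd (le_bot_iff.mp (hJt.trans_eq h)) hJ
  · have : vOp J ≤ vOp J' := by
      have := (hJt.trans hle').trans_eq (vOp_vOp J').symm
      calc vOp J ≤ vOp (vOp J') := vOp_mono (hJt.trans hle')
        _ = vOp J' := vOp_vOp J'
    exact this.trans (vOp_le_tOp hb' hf' hl')

theorem tOp_one : tOp (1 : Submodule R K) = 1 :=
  le_antisymm (tOp_le_one le_rfl) le_tOp

theorem vOp_mul_le {A B : Submodule R K} : vOp A * vOp B ≤ vOp (A * B) := by
  refine Submodule.mul_le.mpr fun x hx y hy => ?_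
  refine mem_div_one.mpr fun w hw => ?_
  have hwB : ∀ b ∈ B, w * b ∈ (1 : Submodule R K) / A := fun b hb =>
    mem_div_one.mpr fun a ha => by
      have : w * (a * b) ∈ (1 : Submodule R K) :=
        mem_div_one.mp hw _ (Submodule.mul_mem_mul ha hb)
      convert this using 1; ring
  have hxw : x * w ∈ (1 : Submodule R K) / B := mem_div_one.mpr fun b hb => by
    have : x * (w * b) ∈ (1 : Submodule R K) := mem_div_one.mp hx _ (hwB b hb)
    convert this using 1; ring
  have : y * (x * w) ∈ (1 : Submodule R K) := mem_div_one.mp hy _ hxw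
  convert this using 1; ring

theorem vOp_pow_le {A : Submodule R K} : ∀ n : ℕ, (vOp A) ^ n ≤ vOp (A ^ n)
  | 0 => by rw [pow_zero, pow_zero]; exact vOp_one.ge
  | n + 1 => by
    rw [pow_succ, pow_succ]
    exact (mul_le_mul' (vOp_pow_le n) le_rfl).trans vOp_mul_le

theorem span_mul_vOp_le {u : K} {J : Submodule R K} :
    Submodule.span R {u} * vOp J ≤ vOp (Submodule.span R {u} * J) :=
  (mul_le_mul' le_vOp le_rfl).trans vOp_mul_le

end AuxLemmas

section AuxLemmas2

variable {R : Type*} [CommRing R] [IsDomain R]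
variable {K : Type*} [Field K] [Algebra R K] [IsFractionRing R K]

theorem mem_loc {P : Ideal R} {x : K} :
    x ∈ loc K P ↔ ∃ a s : R, s ∉ P ∧ x * algebraMap R K s = algebraMap R K a := Iff.rfl

theorem zero_mem_loc {P : Ideal R} (hP : P ≠ ⊤) : (0 : K) ∈ loc K P :=
  ⟨0, 1, fun h => hP (Ideal.eq_top_of_isUnit_mem P h isUnit_one), by simp⟩

theorem loc_antitone {P P' : Ideal R} (h : P ≤ P') : loc K P' ⊆ loc K P := by
  rintro x ⟨a, s, hs, hx⟩
  exact ⟨a, s, fun hmem => hs (h hmem), hx⟩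

theorem mul_algebraMap_mem_loc {P : Ideal R} {x : K} (hx : x ∈ loc K P) (y : R) :
    x * algebraMap R K y ∈ loc K P := by
  obtain ⟨a, s, hs, hx⟩ := hx
  exact ⟨a * y, s, hs, by rw [map_mul, ← hx]; ring⟩

theorem nagata_mul_pow {I : Ideal R} {x : K} {n : ℕ}
    (hx : ∀ y ∈ I ^ (n + 1), ∃ r : R, x * algebraMap R K y = algebraMap R K r) :
    ∀ a ∈ I ^ (n + 1) * I ^ (n + 1),
      ∃ r ∈ I ^ (n + 1), x * algebraMap R K a = algebraMap R K r := by
  intro a ha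
  refine Submodule.mul_induction_on ha ?_ ?_
  · intro b hb c hc
    obtain ⟨r, hr⟩ := hx b hb
    refine ⟨r * c, Ideal.mul_mem_left _ r hc, ?_⟩
    rw [map_mul, map_mul, ← hr]; ring
  · rintro y1 y2 ⟨r1, h1, e1⟩ ⟨r2, h2, e2⟩
    exact ⟨r1 + r2, add_mem h1 h2, by rw [map_add, map_add, mul_add, e1, e2]⟩

theorem minimal_prime_radical {I P : Ideal R} (hP : P ∈ I.minimalPrimes) {p : R}
    (hp : p ∈ P) : ∃ s n, s ∉ P ∧ 0 < n ∧ s * p ^ n ∈ I := by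
  classical
  have hPrime : P.IsPrime := hP.1.1
  have hIP : I ≤ P := hP.1.2
  by_contra hcon
  push_neg at hcon
  set T : Submonoid R := Submonoid.closure ({p} ∪ (P.primeCompl : Set R)) with hT
  have hform : ∀ x ∈ T, ∃ s n, s ∉ P ∧ x = s * p ^ n := by
    intro x hx
    induction hx using Submonoid.closure_induction with
    | mem y hy =>
      rcases hy with hy | hy
      · exact ⟨1, 1, fun h => hPrime.ne_top (Ideal.eq_top_of_isUnit_mem P h isUnit_one),
          by rw [Set.mem_singleton_iff] at hy; rw [hy]; ring⟩
      · exact ⟨y, 0, hy, by ring⟩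
    | one => exact ⟨1, 0, fun h => hPrime.ne_top (Ideal.eq_top_of_isUnit_mem P h isUnit_one),
        by ring⟩
    | mul y z _ _ hy hz =>
      obtain ⟨s1, n1, hs1, rfl⟩ := hy
      obtain ⟨s2, n2, hs2, rfl⟩ := hz
      exact ⟨s1 * s2, n1 + n2,
        fun h => ((hPrime.mem_or_mem h).elim hs1 hs2), by ring⟩
  have hdisj : Disjoint (I : Set R) (T : Set R) := by
    rw [Set.disjoint_left]
    intro x hxI hxT
    obtain ⟨s, n, hs, rfl⟩ := hform x hxT
    rcases Nat.eq_zero_or_pos n with rfl | hn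
    · simp only [pow_zero, mul_one] at hxI
      exact hs (hIP hxI)
    · exact hcon s n hs hn hxI
  obtain ⟨Q, hQprime, hIQ, hQdisj⟩ := Ideal.exists_le_prime_disjoint I T hdisj
  have hQP : Q ≤ P := by
    intro q hq
    by_contra hqP
    exact Set.disjoint_left.mp hQdisj hq
      (Submonoid.subset_closure (Set.mem_union_right _ hqP))
  have hPQ : P ≤ Q := hP.2 ⟨hQprime, hIQ⟩ hQP
  exact Set.disjoint_left.mp hQdisj (hPQ hp)
    (Submonoid.subset_closure (Set.mem_union_left _ rfl))

theorem exists_tmax_ge {J0 : Ideal R} (hJ0 : J0 ≠ ⊤) (ht : IsTIdeal K J0) :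
    ∃ M : Ideal R, IsTMaximal K M ∧ J0 ≤ M := by
  classical
  set s : Set (Ideal R) := {J | J ≠ ⊤ ∧ IsTIdeal K J} with hs
  have hchain : ∀ c ⊆ s, IsChain (· ≤ ·) c → ∀ y ∈ c, ∃ ub ∈ s, ∀ z ∈ c, z ≤ ub := by
    intro c hcs hc y hy
    have hdir : DirectedOn (· ≤ ·) c := hc.directedOn
    have hne : c.Nonempty := ⟨y, hy⟩
    have hmem : ∀ x : R, x ∈ sSup c ↔ ∃ J ∈ c, x ∈ J := by
      intro x
      exact Submodule.mem_sSup_of_directed hne hdir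
    refine ⟨sSup c, ⟨?_, ?_⟩, fun z hz => le_sSup hz⟩
    · intro htop
      have : (1 : R) ∈ sSup c := htop ▸ Submodule.mem_top
      obtain ⟨J, hJ, h1J⟩ := (hmem 1).mp this
      exact (hcs hJ).1 (Ideal.eq_top_of_isUnit_mem J h1J isUnit_one)
    · refine le_antisymm (tOp_le fun J' hJb hJf hJl => ?_) le_tOp
      obtain ⟨T, hT⟩ := hJf
      have hTsub : ∀ z ∈ (T : Set K), ∃ J ∈ c, z ∈ toK R K J := by
        intro z hz
        have : z ∈ toK R K (sSup c) := hJl (hT ▸ Submodule.subset_span hz)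
        obtain ⟨r, hr, rfl⟩ := mem_toK.mp this
        obtain ⟨J, hJ, hrJ⟩ := (hmem r).mp hr
        exact ⟨J, hJ, mem_toK_self hrJ⟩
      have hcommon : ∀ T' : Finset K, (∀ z ∈ (T' : Set K), ∃ J ∈ c, z ∈ toK R K J) →
          ∃ J ∈ c, ∀ z ∈ (T' : Set K), z ∈ toK R K J := by
        classical
        intro T'
        induction T' using Finset.induction_on with
        | empty => exact fun _ => ⟨y, hy, by simp⟩
        | @insert w T'' hwT ih =>
          intro hTsub'
          obtain ⟨J1, hJ1, hwJ1⟩ := hTsub' w (by simp)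
          obtain ⟨J2, hJ2, hTJ2⟩ := ih (fun z hz => hTsub' z (by simp [hz]))
          obtain ⟨J3, hJ3, h13, h23⟩ := hdir J1 hJ1 J2 hJ2
          refine ⟨J3, hJ3, fun z hz => ?_⟩
          rcases Finset.mem_insert.mp hz with rfl | hz
          · exact toK_mono h13 hwJ1
          · exact toK_mono h23 (hTJ2 z hz)
      obtain ⟨J, hJ, hTJ⟩ := hcommon T hTsub
      have hJ'le : J' ≤ toK R K J := by
        rw [← hT, Submodule.span_le]
        exact hTJ
      calc vOp J' ≤ tOp (toK R K J) := vOp_le_tOp hJb ⟨T, hT⟩ hJ'le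
        _ = toK R K J := (hcs hJ).2
        _ ≤ toK R K (sSup c) := toK_mono (le_sSup hJ)
  obtain ⟨M, hJ0M, hMmax⟩ := zorn_le_nonempty₀ s hchain J0 ⟨hJ0, ht⟩
  refine ⟨M, ⟨hMmax.prop.1, hMmax.prop.2, fun J hJt hJtI hMJ =>
    le_antisymm (hMmax.2 ⟨hJt, hJtI⟩ hMJ) hMJ⟩, hJ0M⟩

theorem mem_one_of_forall_loc (z : K) (h : ∀ M : Ideal R, IsTMaximal K M → z ∈ loc K M) :
    ∃ r : R, algebraMap R K r = z := by
  set D : Ideal R := Submodule.comap (Algebra.linearMap R K)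
      (Submodule.comap (LinearMap.mulLeft R z) (1 : Submodule R K)) with hD
  have hmemD : ∀ r : R, r ∈ D ↔ z * algebraMap R K r ∈ (1 : Submodule R K) :=
    fun r => Iff.rfl
  have hDt : IsTIdeal K D := by
    refine le_antisymm (tOp_le fun J hJb hJf hJl => fun w hw => ?_) le_tOp
    have hw1 : w ∈ (1 : Submodule R K) := vOp_le_one (hJl.trans toK_le_one) hw
    obtain ⟨r, rfl⟩ := Submodule.mem_one.mp hw1
    refine mem_toK_self ((hmemD r).mpr ?_)
    have hz1J : z ∈ (1 : Submodule R K) / J := mem_div_one.mpr fun v hv => by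
      obtain ⟨d, hd, rfl⟩ := mem_toK.mp (hJl hv)
      exact (hmemD d).mp hd
    have := mem_div_one.mp hw z hz1J
    rwa [mul_comm]
  by_cases hDtop : D = ⊤
  · have h1 : (1 : R) ∈ D := hDtop ▸ Submodule.mem_top
    have := (hmemD 1).mp h1
    rw [map_one, mul_one] at this
    obtain ⟨r, hr⟩ := Submodule.mem_one.mp this
    exact ⟨r, hr⟩
  · obtain ⟨M, hM, hDM⟩ := exists_tmax_ge hDtop hDt
    obtain ⟨a, s, hs, heq⟩ := h M hM
    refine absurd (hDM ((hmemD s).mpr ?_)) hs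
    rw [heq]
    exact Submodule.mem_one.mpr ⟨a, rfl⟩

end AuxLemmas2

section AuxLemmas3

variable {R : Type*} [CommRing R] [IsDomain R]
variable {K : Type*} [Field K] [Algebra R K] [IsFractionRing R K]

theorem mem_dual {S : Submodule R K} {z : K} :
    z ∈ dual S ↔ ∀ y ∈ S, z * y ∈ (1 : Submodule R K) :=
  Submodule.mem_div_iff_forall_mul_mem

theorem spanSingMul {x y : K} :
    Submodule.span R {x} * Submodule.span R {y} = Submodule.span R {x * y} := by
  rw [Submodule.span_mul_span, Set.singleton_mul_singleton]

theorem spanSingPow {x : K} (n : ℕ) :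
    Submodule.span R {x} ^ n = Submodule.span R {x ^ n} := by
  rw [Submodule.span_pow, Set.singleton_pow]

theorem spanSing_le_one {r : R} :
    Submodule.span R {algebraMap R K r} ≤ (1 : Submodule R K) := by
  rw [Submodule.span_le, Set.singleton_subset_iff]
  exact Submodule.mem_one.mpr ⟨r, rfl⟩

theorem pow_le_one_sub {S : Submodule R K} (h : S ≤ 1) : ∀ m : ℕ, S ^ m ≤ 1
  | 0 => by rw [pow_zero]
  | m + 1 => by
    rw [pow_succ]
    exact (mul_le_mul' (pow_le_one_sub h m) h).trans (mul_one _).le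

theorem natCast_le_one : ∀ m : ℕ, ((m : ℕ) : Submodule R K) ≤ (1 : Submodule R K)
  | 0 => by rw [Nat.cast_zero]; exact bot_le
  | m + 1 => by
    rw [Nat.cast_succ]
    rw [Submodule.add_eq_sup]
    exact sup_le (natCast_le_one m) le_rfl

theorem sum_le_submodule {ι : Type*} (t : Finset ι) (f : ι → Submodule R K)
    (W : Submodule R K) (h : ∀ i ∈ t, f i ≤ W) : (∑ i ∈ t, f i) ≤ W := by
  classical
  induction t using Finset.induction_on with
  | empty => simp
  | @insert i t hit ih =>
    rw [Finset.sum_insert hit, Submodule.add_eq_sup]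
    exact sup_le (h i (Finset.mem_insert_self i t))
      (ih fun j hj => h j (Finset.mem_insert_of_mem hj))

theorem mul_le_toK_of_le_one {I : Ideal R} {W S : Submodule R K}
    (h1 : W ≤ toK R K I) (h2 : S ≤ 1) : W * S ≤ toK R K I :=
  (mul_le_mul' h1 h2).trans (mul_one _).le

theorem loc_dichotomy (hR : IsPVMD R K) (P0 : Ideal R)
    (hP0 : ∀ C : Ideal R, tOp (toK R K C) = 1 → ¬C ≤ P0)
    {x : K} (hx : x ≠ 0) : x ∈ loc K P0 ∨ x⁻¹ ∈ loc K P0 := by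
  obtain ⟨a, b, hb, hab⟩ := IsFractionRing.div_surjective (A := R) x
  have hbne : b ≠ 0 := nonZeroDivisors.ne_zero hb
  have hbK : algebraMap R K b ≠ 0 := fun h => hbne (aux_inj (by rw [h, map_zero]))
  have haK : algebraMap R K a ≠ 0 := by
    intro h
    rw [h, zero_div] at hab
    exact hx hab.symm
  have ha0 : a ≠ 0 := fun h => haK (by rw [h, map_zero])
  set J : Ideal R := Ideal.span {a, b} with hJ
  have hJbot : J ≠ ⊥ := by
    intro h
    rw [hJ, Ideal.span_eq_bot] at h
    exact ha0 (h a (Set.mem_insert a {b}))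
  have hJfg : J.FG := ⟨{a, b}, by simp [hJ]⟩
  have hinv : tOp (toK R K J * dual (toK R K J)) = 1 := hR J hJbot hJfg
  set X := toK R K J * dual (toK R K J) with hX
  have hX1 : X ≤ (1 : Submodule R K) := Submodule.mul_le.mpr fun u hu v hv => by
    have := mem_dual.mp hv u hu
    rwa [mul_comm] at this
  set C : Ideal R := Submodule.comap (Algebra.linearMap R K) X with hC
  have hCX : toK R K C = X := by
    refine le_antisymm (fun z hz => ?_) (fun z hz => ?_)
    · obtain ⟨r, hr, rfl⟩ := mem_toK.mp hz
      exact hr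
    · obtain ⟨r, rfl⟩ := Submodule.mem_one.mp (hX1 hz)
      exact mem_toK_self hz
  have hnle : ¬C ≤ P0 := hP0 C (by rw [hCX]; exact hinv)
  obtain ⟨r, hrC, hrP⟩ := SetLike.not_le_iff_exists.mp hnle
  have haJ : a ∈ J := Ideal.subset_span (Set.mem_insert a {b})
  have hbJ : b ∈ J := Ideal.subset_span (Set.mem_insert_of_mem a rfl)
  have hdecomp : toK R K J =
      Submodule.span R {algebraMap R K a} ⊔ Submodule.span R {algebraMap R K b} := by
    rw [toK, hJ, Ideal.span, Submodule.map_span, Set.image_insert_eq, Set.image_singleton,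
      Submodule.span_insert]
    rfl
  have hrX : algebraMap R K r ∈ X := hrC
  rw [hX, hdecomp, Submodule.sup_mul] at hrX
  obtain ⟨w1, hw1, w2, hw2, hsum⟩ := Submodule.mem_sup.mp hrX
  obtain ⟨u, hu, hw1e⟩ := Submodule.mem_span_singleton_mul.mp hw1
  obtain ⟨v, hv, hw2e⟩ := Submodule.mem_span_singleton_mul.mp hw2
  have haS : algebraMap R K a ∈
      Submodule.span R {algebraMap R K a} ⊔ Submodule.span R {algebraMap R K b} :=
    Submodule.mem_sup_left (Submodule.mem_span_singleton_self _)
  have hbS : algebraMap R K b ∈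
      Submodule.span R {algebraMap R K a} ⊔ Submodule.span R {algebraMap R K b} :=
    Submodule.mem_sup_right (Submodule.mem_span_singleton_self _)
  obtain ⟨r1, hr1⟩ := Submodule.mem_one.mp (by
    have := mem_dual.mp hu _ haS
    rwa [mul_comm] at this : algebraMap R K a * u ∈ (1 : Submodule R K))
  obtain ⟨r2, hr2⟩ := Submodule.mem_one.mp (by
    have := mem_dual.mp hv _ hbS
    rwa [mul_comm] at this : algebraMap R K b * v ∈ (1 : Submodule R K))
  obtain ⟨c1, hc1⟩ := Submodule.mem_one.mp (mem_dual.mp hu _ hbS)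
  obtain ⟨c2, hc2⟩ := Submodule.mem_one.mp (mem_dual.mp hv _ haS)
  have hr12 : r = r1 + r2 := by
    refine aux_inj (K := K) ?_
    rw [map_add, hr1, hr2, hw1e, hw2e, hsum]
  by_cases hr1P : r1 ∈ P0
  · have hr2P : r2 ∉ P0 := fun h => hrP (hr12 ▸ add_mem hr1P h)
    left
    refine ⟨c2, r2, hr2P, ?_⟩
    rw [hr2, ← hab, hc2]
    field_simp
  · right
    refine ⟨c1, r1, hr1P, ?_⟩
    rw [hr1, ← hab, hc1, inv_div]
    field_simp

theorem IsTMaximal.isPrime {M : Ideal R} (hM : IsTMaximal K M) : M.IsPrime := by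
  rw [Ideal.isPrime_iff]
  refine ⟨hM.1, fun {a b} hab => ?_⟩
  by_contra hcontra
  push_neg at hcontra
  obtain ⟨ha, hb⟩ := hcontra
  have hb0 : b ≠ 0 := fun h => hb (h ▸ M.zero_mem)
  have hbK : algebraMap R K b ≠ 0 := fun h => hb0 (aux_inj (by rw [h, map_zero]))
  set A := tOp (toK R K (M ⊔ Ideal.span {a})) with hA
  have hMt : tOp (toK R K M) = toK R K M := hM.2.1
  by_cases h1 : (1 : K) ∈ A
  · obtain ⟨J, hJb, hJf, hJl, h1J⟩ := mem_tOp h1 one_ne_zero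
    have hbJle : Submodule.span R {algebraMap R K b} * J ≤ toK R K M := by
      refine Submodule.mul_le.mpr fun u hu v hv => ?_
      obtain ⟨c, rfl⟩ := Submodule.mem_span_singleton.mp hu
      obtain ⟨w, hw, rfl⟩ := mem_toK.mp (hJl hv)
      obtain ⟨m, hm, y, hy, hmy⟩ := Submodule.mem_sup.mp hw
      obtain ⟨d, rfl⟩ := Ideal.mem_span_singleton'.mp hy
      have hbw : b * w ∈ M := by
        rw [← hmy, mul_add]
        refine add_mem (M.mul_mem_left b hm) ?_
        have : b * (d * a) = d * (a * b) := by ring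
        rw [this]
        exact M.mul_mem_left d hab
      have : c • algebraMap R K b * algebraMap R K w
          = c • algebraMap R K (b * w) := by
        rw [map_mul, smul_mul_assoc]
      rw [this]
      exact Submodule.smul_mem _ c (mem_toK_self hbw)
    have hprodb : Submodule.span R {algebraMap R K b} * J ≠ ⊥ := by
      obtain ⟨y, hyJ, hy0⟩ := Submodule.exists_mem_ne_zero_of_ne_bot hJb
      rw [Submodule.ne_bot_iff]
      exact ⟨algebraMap R K b * y,
        Submodule.mul_mem_mul (Submodule.mem_span_singleton_self _) hyJ,
        mul_ne_zero hbK hy0⟩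
    have hbA : algebraMap R K b ∈ toK R K M := by
      have hmem : algebraMap R K b * 1 ∈ Submodule.span R {algebraMap R K b} * vOp J :=
        Submodule.mul_mem_mul (Submodule.mem_span_singleton_self _) h1J
      have h2 : Submodule.span R {algebraMap R K b} * vOp J ≤
          vOp (Submodule.span R {algebraMap R K b} * J) := span_mul_vOp_le
      have h3 : vOp (Submodule.span R {algebraMap R K b} * J) ≤ toK R K M :=
        (vOp_le_tOp hprodb ((Submodule.fg_span_singleton _).mul hJf) hbJle).trans hMt.le
      have := h3 (h2 hmem)
      rwa [mul_one] at this
    exact hb (mem_toK_iff.mp hbA)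
  · set C : Ideal R := Submodule.comap (Algebra.linearMap R K) A with hC
    have hAle1 : A ≤ 1 := tOp_le_one toK_le_one
    have hCK : toK R K C = A := by
      refine le_antisymm (fun z hz => ?_) (fun z hz => ?_)
      · obtain ⟨r, hr, rfl⟩ := mem_toK.mp hz
        exact hr
      · obtain ⟨r, rfl⟩ := Submodule.mem_one.mp (hAle1 hz)
        exact mem_toK_self hz
    have hCt : IsTIdeal K C := by rw [IsTIdeal, hCK, hA, tOp_tOp]
    have hCtop : C ≠ ⊤ := by
      intro h
      refine h1 ?_
      have : (1 : R) ∈ C := h ▸ Submodule.mem_top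
      have h1A : algebraMap R K 1 ∈ A := this
      rwa [map_one] at h1A
    have hMC : M ≤ C := fun m hm =>
      show algebraMap R K m ∈ A from le_tOp (mem_toK_self (Submodule.mem_sup_left hm))
    have hCM : C = M := hM.2.2 C hCtop hCt hMC
    have haC : a ∈ C :=
      show algebraMap R K a ∈ A from le_tOp (mem_toK_self
        (Submodule.mem_sup_right (Ideal.subset_span rfl)))
    exact ha (hCM ▸ haC)

end AuxLemmas3

section AuxLemmas4

variable {R : Type*} [CommRing R] [IsDomain R]
variable {K : Type*} [Field K] [Algebra R K] [IsFractionRing R K]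

theorem span_pow_into {I P : Ideal R} (hP : P ∈ I.minimalPrimes) (T : Finset K) :
    ↑T ⊆ (toK R K P : Set K) →
    ∃ s : R, s ∉ P ∧ ∃ N : ℕ,
      Submodule.span R {algebraMap R K s} * Submodule.span R (T : Set K) ^ N ≤ toK R K I := by
  classical
  have hPrime : P.IsPrime := hP.1.1
  have h1P : (1 : R) ∉ P := fun h => hPrime.ne_top (Ideal.eq_top_of_isUnit_mem P h isUnit_one)
  induction T using Finset.induction_on with
  | empty =>
    intro _
    refine ⟨1, h1P, 1, ?_⟩
    simp
  | @insert x T hxT ih =>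
    intro hT
    have hx : x ∈ toK R K P := hT (by simp)
    obtain ⟨q, hq, rfl⟩ := mem_toK.mp hx
    obtain ⟨s1, n, hs1, hn, hsq⟩ := minimal_prime_radical hP hq
    obtain ⟨s2, hs2, N2, hT2⟩ := ih (fun z hz => hT (by simp [hz]))
    set B := Submodule.span R (T : Set K) with hB
    have hB1 : B ≤ (1 : Submodule R K) := by
      rw [hB, Submodule.span_le]
      exact fun z hz => toK_le_one (hT (by simp [hz]))
    refine ⟨s1 * s2, fun hmem => (hPrime.mem_or_mem hmem).elim hs1 hs2, N2 + n, ?_⟩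
    have hins : Submodule.span R (↑(insert (algebraMap R K q) T) : Set K) =
        Submodule.span R {algebraMap R K q} + B := by
      rw [Finset.coe_insert, Submodule.span_insert, Submodule.add_eq_sup]
    rw [hins, add_pow, Finset.mul_sum]
    refine sum_le_submodule _ _ _ fun k hk => ?_
    have hsplit : Submodule.span R {algebraMap R K (s1 * s2)} =
        Submodule.span R {algebraMap R K s1} * Submodule.span R {algebraMap R K s2} := by
      rw [spanSingMul, ← map_mul]
    have hAk : Submodule.span R {algebraMap R K q} ^ k =
        Submodule.span R {algebraMap R K (q ^ k)} := by
      rw [spanSingPow, map_pow]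
    by_cases hkn : n ≤ k
    · have hs1q : s1 * q ^ k ∈ I := by
        have : s1 * q ^ k = s1 * q ^ n * q ^ (k - n) := by
          rw [mul_assoc, ← pow_add, Nat.add_sub_cancel' hkn]
        rw [this]
        exact I.mul_mem_right _ hsq
      have hleft : Submodule.span R {algebraMap R K s1} *
          Submodule.span R {algebraMap R K (q ^ k)} ≤ toK R K I := by
        rw [spanSingMul, ← map_mul, Submodule.span_le, Set.singleton_subset_iff]
        exact mem_toK_self hs1q
      have hright : Submodule.span R {algebraMap R K s2} *
          (B ^ (N2 + n - k) * ((N2 + n).choose k : Submodule R K)) ≤ 1 := by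
        refine (mul_le_mul' spanSing_le_one
          ((mul_le_mul' (pow_le_one_sub hB1 _) (natCast_le_one _)).trans
            (mul_one _).le)).trans (mul_one _).le
      calc Submodule.span R {algebraMap R K (s1 * s2)} *
            (Submodule.span R {algebraMap R K q} ^ k * B ^ (N2 + n - k) *
              ((N2 + n).choose k : Submodule R K))
          = (Submodule.span R {algebraMap R K s1} *
              Submodule.span R {algebraMap R K (q ^ k)}) *
            (Submodule.span R {algebraMap R K s2} *
              (B ^ (N2 + n - k) * ((N2 + n).choose k : Submodule R K))) := by
            rw [hsplit, hAk]; ring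
        _ ≤ toK R K I * 1 := mul_le_mul' hleft hright
        _ = toK R K I := mul_one _
    · have hkN : k ≤ N2 + n := by
        simp only [Finset.mem_range] at hk
        omega
      have hpowsplit : B ^ (N2 + n - k) = B ^ N2 * B ^ (n - k) := by
        rw [← pow_add]
        congr 1
        omega
      have hright : Submodule.span R {algebraMap R K s1} *
          (Submodule.span R {algebraMap R K q} ^ k *
            (B ^ (n - k) * ((N2 + n).choose k : Submodule R K))) ≤ 1 := by
        refine (mul_le_mul' spanSing_le_one
          ((mul_le_mul' (hAk ▸ spanSing_le_one)
            ((mul_le_mul' (pow_le_one_sub hB1 _) (natCast_le_one _)).trans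
              (mul_one _).le)).trans (mul_one _).le)).trans (mul_one _).le
      calc Submodule.span R {algebraMap R K (s1 * s2)} *
            (Submodule.span R {algebraMap R K q} ^ k * B ^ (N2 + n - k) *
              ((N2 + n).choose k : Submodule R K))
          = (Submodule.span R {algebraMap R K s2} * B ^ N2) *
            (Submodule.span R {algebraMap R K s1} *
              (Submodule.span R {algebraMap R K q} ^ k *
                (B ^ (n - k) * ((N2 + n).choose k : Submodule R K)))) := by
            rw [hsplit, hpowsplit]; ring
        _ ≤ toK R K I * 1 := mul_le_mul' hT2 hright
        _ = toK R K I := mul_one _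

theorem one_not_mem_tOp_minimalPrime {I P : Ideal R} (hItI : IsTIdeal K I)
    (hP : P ∈ I.minimalPrimes) : (1 : K) ∉ tOp (toK R K P) := by
  intro h1
  obtain ⟨J, hJb, hJf, hJl, h1J⟩ := mem_tOp h1 one_ne_zero
  obtain ⟨T, hT⟩ := hJf
  have hTsub : ↑T ⊆ (toK R K P : Set K) := fun t ht =>
    hJl (hT ▸ Submodule.subset_span ht)
  obtain ⟨s, hs, N, hle⟩ := span_pow_into hP T hTsub
  have hs0 : s ≠ 0 := fun h => hs (h ▸ P.zero_mem)
  have hsK : algebraMap R K s ≠ 0 := fun h => hs0 (aux_inj (by rw [h, map_zero]))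
  have h1N : (1 : K) ∈ vOp J ^ N := by
    have := Submodule.pow_mem_pow _ h1J N
    rwa [one_pow] at this
  have hmem : algebraMap R K s * 1 ∈
      Submodule.span R {algebraMap R K s} * vOp J ^ N :=
    Submodule.mul_mem_mul (Submodule.mem_span_singleton_self _) h1N
  have h2 : Submodule.span R {algebraMap R K s} * vOp J ^ N ≤
      vOp (Submodule.span R {algebraMap R K s} * J ^ N) :=
    (mul_le_mul' le_rfl (vOp_pow_le N)).trans span_mul_vOp_le
  have hJle : Submodule.span R {algebraMap R K s} * J ^ N ≤ toK R K I := by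
    rw [← hT]
    exact hle
  have hbot : Submodule.span R {algebraMap R K s} * J ^ N ≠ ⊥ := by
    obtain ⟨y, hyJ, hy0⟩ := Submodule.exists_mem_ne_zero_of_ne_bot hJb
    rw [Submodule.ne_bot_iff]
    exact ⟨algebraMap R K s * y ^ N,
      Submodule.mul_mem_mul (Submodule.mem_span_singleton_self _)
        (Submodule.pow_mem_pow _ hyJ N),
      mul_ne_zero hsK (pow_ne_zero N hy0)⟩
  have hfg : (Submodule.span R {algebraMap R K s} * J ^ N).FG :=
    Submodule.FG.mul (Submodule.fg_span_singleton _) (Submodule.FG.pow ⟨T, hT⟩ N)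
  have h3 : vOp (Submodule.span R {algebraMap R K s} * J ^ N) ≤ toK R K I :=
    (vOp_le_tOp hbot hfg hJle).trans hItI.le
  have hsI : algebraMap R K s ∈ toK R K I := by
    have := h3 (h2 hmem)
    rwa [mul_one] at this
  exact hs (hP.1.2 (mem_toK_iff.mp hsI))

end AuxLemmas4

/-- Let `R` be a PVMD, `I` a `t`-ideal of `R`, `{P_α}` the minimal
primes of `I`, `{M_β}` the `t`-maximal ideals not containing `I`, and for each minimal
prime `P` let `Q P` be the (unique) prime with `⋂_{n ≥ 1} Iⁿ R_P = (Q P) R_P`. Then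
`T(I) ⊆ (⋂ R_{Q P}) ∩ (⋂ R_{M_β})`, with equality if `I` has finitely many minimal
primes. -/
theorem statement_13 (hR : IsPVMD R K) (I : Ideal R) (hbot : I ≠ ⊥) (htop : I ≠ ⊤)
    (htI : IsTIdeal K I) (Q : Ideal R → Ideal R)
    (hQ : ∀ P ∈ I.minimalPrimes, (Q P).IsPrime ∧
      (⋂ n : ℕ, locIdealAt K (I ^ (n + 1)) P) = locIdealAt K (Q P) P) :
    ((nagata K I : Set K) ⊆
        (⋂ P ∈ I.minimalPrimes, loc K (Q P)) ∩
          (⋂ M ∈ {M : Ideal R | IsTMaximal K M ∧ ¬ I ≤ M}, loc K M)) ∧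
      (I.minimalPrimes.Finite →
        (nagata K I : Set K) =
          (⋂ P ∈ I.minimalPrimes, loc K (Q P)) ∩
            (⋂ M ∈ {M : Ideal R | IsTMaximal K M ∧ ¬ I ≤ M}, loc K M)) := by
  classical
  have hprimeQ : ∀ P ∈ I.minimalPrimes, (Q P).IsPrime := fun P hP => (hQ P hP).1
  -- `Q P ≤ P`
  have hQP : ∀ P, ∀ hP : P ∈ I.minimalPrimes, Q P ≤ P := by
    intro P hP q hq
    have hPrime : P.IsPrime := hP.1.1
    have h1P : (1 : R) ∉ P := fun h => hPrime.ne_top (Ideal.eq_top_of_isUnit_mem P h isUnit_one)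
    have hmem : (algebraMap R K q) ∈ locIdealAt K (Q P) P :=
      ⟨q, hq, 1, h1P, by rw [map_one, mul_one]⟩
    rw [← (hQ P hP).2] at hmem
    have hmem1 : algebraMap R K q ∈ locIdealAt K (I ^ (0 + 1)) P := Set.mem_iInter.mp hmem 0
    obtain ⟨a, ha, s, hs, heq⟩ := hmem1
    rw [← map_mul] at heq
    have hqs : q * s = a := aux_inj heq
    have haP : a ∈ P := hP.1.2 (by rwa [zero_add, pow_one] at ha)
    rcases hPrime.mem_or_mem (hqs ▸ haP) with h | h
    · exact h
    · exact absurd h hs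
  -- dichotomy at minimal primes
  have hdich : ∀ P ∈ I.minimalPrimes, ∀ x : K, x ≠ 0 → x ∈ loc K P ∨ x⁻¹ ∈ loc K P := by
    intro P hP x hx
    refine loc_dichotomy hR P (fun C hC hle => ?_) hx
    have h1 : (1 : K) ∈ tOp (toK R K C) := hC ▸ Submodule.mem_one.mpr ⟨1, map_one _⟩
    exact one_not_mem_tOp_minimalPrime htI hP (tOp_mono (toK_mono hle) h1)
  -- dichotomy at t-maximal ideals
  have hdichM : ∀ M : Ideal R, IsTMaximal K M → ∀ x : K, x ≠ 0 →
      x ∈ loc K M ∨ x⁻¹ ∈ loc K M := by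
    intro M hM x hx
    refine loc_dichotomy hR M (fun C hC hle => ?_) hx
    have h1 : (1 : K) ∈ tOp (toK R K C) := hC ▸ Submodule.mem_one.mpr ⟨1, map_one _⟩
    have h2 : (1 : K) ∈ toK R K M := hM.2.1 ▸ tOp_mono (toK_mono hle) h1
    rw [← map_one (algebraMap R K)] at h2
    exact hM.1 (Ideal.eq_top_of_isUnit_mem M (mem_toK_iff.mp h2) isUnit_one)
  have part1 : (nagata K I : Set K) ⊆
      (⋂ P ∈ I.minimalPrimes, loc K (Q P)) ∩
        (⋂ M ∈ {M : Ideal R | IsTMaximal K M ∧ ¬ I ≤ M}, loc K M) := by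
    intro x hx
    obtain ⟨n, hn⟩ : ∃ n : ℕ, ∀ y ∈ I ^ (n + 1),
        ∃ r : R, x * algebraMap R K y = algebraMap R K r := hx
    constructor
    · refine Set.mem_iInter₂.mpr fun P hP => ?_
      by_cases hx0 : x = 0
      · exact hx0 ▸ zero_mem_loc (hprimeQ P hP).ne_top
      by_contra hxQ
      have hxP : x ∉ loc K P := fun h => hxQ (loc_antitone (hQP P hP) h)
      have hxinv : x⁻¹ ∈ loc K P := (hdich P hP x hx0).resolve_left hxP
      obtain ⟨c, t, ht, hxt⟩ := hxinv
      have hct : c ∈ Q P := by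
        by_contra hcQ
        refine hxQ ⟨t, c, hcQ, ?_⟩
        rw [← hxt, ← mul_assoc, mul_inv_cancel₀ hx0, one_mul]
      have hloc : x⁻¹ ∈ locIdealAt K (Q P) P := ⟨c, hct, t, ht, hxt⟩
      rw [← (hQ P hP).2] at hloc
      have hloc2 : x⁻¹ ∈ locIdealAt K (I ^ (2 * n + 1 + 1)) P :=
        Set.mem_iInter.mp hloc (2 * n + 1)
      obtain ⟨a, haI, s', hs', heq⟩ := hloc2
      have hsplit : I ^ (2 * n + 1 + 1) = I ^ (n + 1) * I ^ (n + 1) := by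
        rw [← pow_add]
        congr 1
        omega
      obtain ⟨r', hr', hxa⟩ := nagata_mul_pow hn a (hsplit ▸ haI)
      have hseq : algebraMap R K s' = algebraMap R K r' := by
        rw [← hxa, ← heq, ← mul_assoc, mul_inv_cancel₀ hx0, one_mul]
      have hs'I : s' ∈ I ^ (n + 1) := (aux_inj hseq) ▸ hr'
      exact hs' (hP.1.2 (Ideal.pow_le_self (Nat.succ_ne_zero n) hs'I))
    · refine Set.mem_iInter₂.mpr fun M hM => ?_
      obtain ⟨hMt, hnle⟩ := hM
      have hMprime : M.IsPrime := IsTMaximal.isPrime hMt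
      obtain ⟨s, hsI, hsM⟩ := SetLike.not_le_iff_exists.mp hnle
      have hsn : s ^ (n + 1) ∈ I ^ (n + 1) := Ideal.pow_mem_pow hsI (n + 1)
      obtain ⟨r, hr⟩ := hn (s ^ (n + 1)) hsn
      exact ⟨r, s ^ (n + 1), fun h => hsM (hMprime.mem_of_pow_mem _ h), hr⟩
  refine ⟨part1, fun hfin => Set.Subset.antisymm part1 ?_⟩
  rintro x ⟨hx1, hx2⟩
  have hq1 : ∀ P ∈ I.minimalPrimes, x ∈ loc K (Q P) := Set.mem_iInter₂.mp hx1
  have hq2 : ∀ M : Ideal R, IsTMaximal K M → ¬I ≤ M → x ∈ loc K M := fun M h1 h2 =>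
    Set.mem_iInter₂.mp hx2 M ⟨h1, h2⟩
  have hdata : ∀ P : Ideal R, P ∈ I.minimalPrimes → ∃ (s c : R) (m : ℕ),
      s ∉ Q P ∧ x * algebraMap R K s = algebraMap R K c ∧
        algebraMap R K s ∉ locIdealAt K (I ^ (m + 1)) P := by
    intro P hP
    obtain ⟨c, s, hs, hxs⟩ := hq1 P hP
    suffices h : ∃ m : ℕ, algebraMap R K s ∉ locIdealAt K (I ^ (m + 1)) P by
      obtain ⟨m, hm⟩ := h
      exact ⟨s, c, m, hs, hxs, hm⟩
    by_contra hcon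
    push_neg at hcon
    have hmem : algebraMap R K s ∈ locIdealAt K (Q P) P :=
      (hQ P hP).2 ▸ Set.mem_iInter.mpr hcon
    obtain ⟨a, haQ, t, ht, heq⟩ := hmem
    rw [← map_mul] at heq
    have hst : s * t = a := aux_inj heq
    have htQ : t ∉ Q P := fun h => ht (hQP P hP h)
    rcases (hprimeQ P hP).mem_or_mem (hst ▸ haQ) with h | h
    · exact hs h
    · exact htQ h
  choose! sfun cfun mfun hsfun hcfun hmfun using hdata
  set F := hfin.toFinset with hF
  set N := F.sup mfun with hN
  show ∃ n : ℕ, ∀ y ∈ I ^ (n + 1), ∃ r : R, x * algebraMap R K y = algebraMap R K r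
  refine ⟨N, fun y hy => ?_⟩
  suffices h : ∃ r : R, algebraMap R K r = x * algebraMap R K y from
    ⟨h.choose, h.choose_spec.symm⟩
  refine mem_one_of_forall_loc _ fun M hM => ?_
  by_cases hIM : I ≤ M
  · have hMprime : M.IsPrime := IsTMaximal.isPrime hM
    obtain ⟨P, hP, hPM⟩ := Ideal.exists_minimalPrimes_le hIM
    by_cases hy0 : algebraMap R K y = 0
    · rw [hy0, mul_zero]
      exact zero_mem_loc hM.1
    have hs := hsfun P hP
    have hc := hcfun P hP
    have hm := hmfun P hP
    have hsP0 : sfun P ≠ 0 := fun h => hs (h ▸ (Q P).zero_mem)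
    have hsK : algebraMap R K (sfun P) ≠ 0 := fun h => hsP0 (aux_inj (by rw [h, map_zero]))
    set w := algebraMap R K y / algebraMap R K (sfun P) with hw
    have hw0 : w ≠ 0 := div_ne_zero hy0 hsK
    rcases hdichM M hM w hw0 with hwM | hwM
    · obtain ⟨d, t, ht, hwt⟩ := hwM
      rw [hw, div_mul_eq_mul_div, div_eq_iff hsK] at hwt
      refine ⟨cfun P * d, t, ht, ?_⟩
      calc x * algebraMap R K y * algebraMap R K t
          = x * (algebraMap R K y * algebraMap R K t) := by ring
        _ = x * (algebraMap R K d * algebraMap R K (sfun P)) := by rw [hwt]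
        _ = x * algebraMap R K (sfun P) * algebraMap R K d := by ring
        _ = algebraMap R K (cfun P) * algebraMap R K d := by rw [hc]
        _ = algebraMap R K (cfun P * d) := (map_mul _ _ _).symm
    · exfalso
      obtain ⟨d, t, ht, hwt⟩ := hwM
      rw [hw, inv_div, div_mul_eq_mul_div, div_eq_iff hy0] at hwt
      refine hm ⟨d * y, ?_, t, fun htP => ht (hPM htP), ?_⟩
      · refine Ideal.mul_mem_left _ d (Ideal.pow_le_pow_right ?_ hy)
        have : mfun P ≤ N := hN ▸ Finset.le_sup (hF ▸ hfin.mem_toFinset.mpr hP)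
        omega
      · rw [map_mul]
        exact hwt
  · exact mul_algebraMap_mem_loc (hq2 M hM hIM) y

end Statements

end

end PVMDPaper
end

section
/- Let R be a PVMD, I a t-ideal of R, and T a t-linked overring of R contained in the Kaplansky transform Ω(I). If (IT)_{t₁} = T, where t₁ is the t-operation of the ring T, then T = Ω(I). -/
/-!
Common definitions: star operations (`v`- and `t`-closure), `t`-ideals, `t`-invertibility,
PVMDs, overrings, `t`-linked and `t`-flat overrings, localizations inside the quotient
field, Nagata and Kaplansky transforms, endomorphism rings of ideals.
-/

open scoped Classical

namespace PVMDPaper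

noncomputable section

section AuxLemmas

variable {A : Type*} [CommRing A] {K : Type*} [Field K] [Algebra A K]

lemma aux_one_ne_bot : (1 : Submodule A K) ≠ ⊥ := by
  intro h
  have h1 : (1 : K) ∈ (1 : Submodule A K) := Submodule.one_le.mp le_rfl
  rw [h, Submodule.mem_bot] at h1
  exact one_ne_zero h1

lemma aux_div_le_div {I J J' : Submodule A K} (h : J ≤ J') : I / J' ≤ I / J := fun x hx =>
  Submodule.mem_div_iff_forall_mul_mem.mpr fun y hy =>
    Submodule.mem_div_iff_forall_mul_mem.mp hx y (h hy)

lemma aux_vOp_mono {J J' : Submodule A K} (h : J ≤ J') : vOp J ≤ vOp J' :=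
  aux_div_le_div (aux_div_le_div h)

lemma aux_exists_fg_of_tOp_eq_one {I : Submodule A K} (h : tOp I = 1) :
    ∃ J : Submodule A K, J ≠ ⊥ ∧ J.FG ∧ J ≤ I ∧ 1 / J ≤ 1 := by
  classical
  have hne : {V | ∃ J : Submodule A K, J ≠ ⊥ ∧ J.FG ∧ J ≤ I ∧ V = vOp J}.Nonempty := by
    by_contra hc
    rw [Set.not_nonempty_iff_eq_empty] at hc
    rw [tOp, hc, sSup_empty] at h
    exact aux_one_ne_bot h.symm
  have hdir : DirectedOn (· ≤ ·) {V | ∃ J : Submodule A K, J ≠ ⊥ ∧ J.FG ∧ J ≤ I ∧ V = vOp J} := by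
    rintro _ ⟨J1, h1b, h1f, h1le, rfl⟩ _ ⟨J2, h2b, h2f, h2le, rfl⟩
    refine ⟨vOp (J1 ⊔ J2), ⟨J1 ⊔ J2, ?_, h1f.sup h2f, sup_le h1le h2le, rfl⟩,
      aux_vOp_mono le_sup_left, aux_vOp_mono le_sup_right⟩
    intro hb
    exact h1b (le_bot_iff.mp (hb ▸ (le_sup_left : J1 ≤ J1 ⊔ J2)))
  have h1 : (1 : K) ∈ tOp I := by
    rw [h]; exact Submodule.one_le.mp le_rfl
  rw [tOp] at h1
  obtain ⟨V, hV, hmem⟩ := (Submodule.mem_sSup_of_directed hne hdir).mp h1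
  obtain ⟨J, hb, hf, hle, rfl⟩ := hV
  refine ⟨J, hb, hf, hle, fun x hx => ?_⟩
  have := Submodule.mem_div_iff_forall_mul_mem.mp hmem x hx
  rwa [one_mul] at this

lemma aux_dual_eq_one_of {J : Submodule A K} (hle : J ≤ 1) (hd : 1 / J ≤ 1) : dual J = 1 := by
  refine le_antisymm hd fun x hx => ?_
  refine Submodule.mem_div_iff_forall_mul_mem.mpr fun y hy => ?_
  have := Submodule.mul_mem_mul hx (hle hy)
  rwa [one_mul (1 : Submodule A K)] at this

lemma aux_mem_one_iff {x : K} :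
    x ∈ (1 : Submodule A K) ↔ ∃ r : A, algebraMap A K r = x := by
  rw [Submodule.one_eq_range]
  exact ⟨fun ⟨r, hr⟩ => ⟨r, hr⟩, fun ⟨r, hr⟩ => ⟨r, hr⟩⟩

lemma aux_toK_le_one (I : Ideal A) : toK A K I ≤ 1 := by
  rintro _ ⟨a, _, rfl⟩
  exact aux_mem_one_iff.mpr ⟨a, rfl⟩

lemma aux_toK_mul (I J : Ideal A) :
    toK A K (I * J) = toK A K I * toK A K J := by
  have : Algebra.linearMap A K = (Algebra.ofId A K).toLinearMap := rfl
  rw [toK, toK, toK, this, Submodule.map_mul]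

lemma aux_toK_pow (I : Ideal A) (m : ℕ) : toK A K (I ^ (m + 1)) = (toK A K I) ^ (m + 1) := by
  induction m with
  | zero => simp [pow_one]
  | succ n ih => rw [pow_succ, aux_toK_mul, ih, pow_succ]; ring

lemma aux_dual_toK_pow {B : Ideal A} (hB : dual (toK A K B) = 1) (m : ℕ) :
    dual (toK A K (B ^ (m + 1))) = 1 := by
  induction m with
  | zero => rwa [pow_one]
  | succ n ih =>
    refine aux_dual_eq_one_of (aux_toK_le_one _) ?_
    intro x hx
    have hx' : x ∈ dual (toK A K (B ^ (n + 1))) := by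
      refine Submodule.mem_div_iff_forall_mul_mem.mpr fun y hy => ?_
      have hxy : x * y ∈ dual (toK A K B) := by
        refine Submodule.mem_div_iff_forall_mul_mem.mpr fun z hz => ?_
        have hyz : y * z ∈ toK A K (B ^ (n + 1 + 1)) := by
          rw [pow_succ, aux_toK_mul]
          exact Submodule.mul_mem_mul hy hz
        have := Submodule.mem_div_iff_forall_mul_mem.mp hx (y * z) hyz
        rwa [mul_assoc]
      rwa [hB] at hxy
    rw [ih] at hx'
    exact hx'

end AuxLemmas

section Statements

variable {R : Type*} [CommRing R] [IsDomain R]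
variable {K : Type*} [Field K] [Algebra R K] [IsFractionRing R K]

lemma aux_mem_oneT {T : Subalgebra R K} {x : K} (hx : x ∈ T) : x ∈ (1 : Submodule T K) :=
  aux_mem_one_iff.mpr ⟨⟨x, hx⟩, rfl⟩

lemma aux_mem_T_of_oneT {T : Subalgebra R K} {x : K} (hx : x ∈ (1 : Submodule T K)) : x ∈ T := by
  obtain ⟨t, rfl⟩ := aux_mem_one_iff.mp hx
  exact t.2

lemma aux_oneR_le_oneT {T : Subalgebra R K} {x : K} (hx : x ∈ (1 : Submodule R K)) :
    x ∈ (1 : Submodule T K) := by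
  obtain ⟨r, rfl⟩ := aux_mem_one_iff.mp hx
  exact aux_mem_oneT (T.algebraMap_mem r)

lemma aux_oneT_mul {T : Subalgebra R K} {x y : K} (hx : x ∈ (1 : Submodule T K))
    (hy : y ∈ (1 : Submodule T K)) : x * y ∈ (1 : Submodule T K) := by
  have := Submodule.mul_mem_mul hx hy
  rwa [one_mul (1 : Submodule T K)] at this

lemma aux_pow_le_pow {M N : Submodule R K} (h : M ≤ N) (n : ℕ) : M ^ n ≤ N ^ n := by
  induction n with
  | zero => exact le_rfl
  | succ m ih => rw [pow_succ, pow_succ]; exact mul_le_mul' ih h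

/-- Let `R` be a PVMD, `I` a `t`-ideal of `R`, and `T` a `t`-linked
overring of `R` contained in `Ω(I)`. If `(IT)_{t₁} = T` then `T = Ω(I)`. -/
theorem statement_15 (hR : IsPVMD R K) (I : Ideal R) (hbot : I ≠ ⊥) (htI : IsTIdeal K I)
    (T : Subalgebra R K) (hTl : IsTLinked T)
    (hTsub : (T : Set K) ⊆ (kaplansky K I : Set K))
    (h : tOp (extendI I T) = 1) :
    (T : Set K) = (kaplansky K I : Set K) := by
  classical
  refine Set.Subset.antisymm hTsub fun u hu => ?_
  have hu' : ∀ a ∈ I, ∃ n : ℕ, 0 < n ∧ ∃ r : R, u * (algebraMap R K a) ^ n = algebraMap R K r :=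
    hu
  -- Step 1: extract a finitely generated `J ≤ IT` with `1/J ≤ 1`
  obtain ⟨J, hJb, hJf, hJle, hJdiv⟩ := aux_exists_fg_of_tOp_eq_one h
  -- Step 2: find a finite set of generators inside `I`
  obtain ⟨s, hs⟩ := hJf
  have hgen : ∀ g : K, g ∈ (s : Set K) → ∃ t : Finset K,
      ↑t ⊆ (algebraMap R K '' (I : Set R)) ∧ g ∈ Submodule.span T (t : Set K) := fun g hg =>
    Submodule.mem_span_finite_of_mem_span (hJle (hs ▸ Submodule.subset_span hg))
  choose tf htf1 htf2 using hgen
  set t : Finset K := s.attach.biUnion (fun g => tf g.1 (Finset.mem_coe.mpr g.2)) with ht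
  have htsub : (t : Set K) ⊆ (algebraMap R K '' (I : Set R)) := by
    intro x hx
    rw [Finset.mem_coe, ht, Finset.mem_biUnion] at hx
    obtain ⟨g, _, hg⟩ := hx
    exact htf1 g.1 (Finset.mem_coe.mpr g.2) hg
  have hJt : J ≤ Submodule.span T (t : Set K) := by
    rw [← hs]
    refine Submodule.span_le.mpr fun g hg => ?_
    refine Submodule.span_mono ?_ (htf2 g hg)
    intro x hx
    exact Finset.mem_coe.mpr (Finset.mem_biUnion.mpr
      ⟨⟨g, Finset.mem_coe.mp hg⟩, Finset.mem_attach _ _, hx⟩)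
  have hpre : ∀ x : K, x ∈ (t : Set K) → ∃ a : R, a ∈ I ∧ algebraMap R K a = x := by
    intro x hx
    obtain ⟨a, ha, hax⟩ := htsub hx
    exact ⟨a, ha, hax⟩
  choose bfun hb1 hb2 using hpre
  set t₀ : Finset R := t.attach.image (fun x => bfun x.1 (Finset.mem_coe.mpr x.2)) with ht₀
  have ht₀I : (t₀ : Set R) ⊆ (I : Set R) := by
    intro a ha
    rw [Finset.mem_coe, ht₀, Finset.mem_image] at ha
    obtain ⟨x, _, rfl⟩ := ha
    exact hb1 _ _
  have himg : algebraMap R K '' (t₀ : Set R) = (t : Set K) := by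
    apply Set.Subset.antisymm
    · rintro _ ⟨a, ha, rfl⟩
      rw [Finset.mem_coe, ht₀, Finset.mem_image] at ha
      obtain ⟨x, _, rfl⟩ := ha
      rw [hb2 x.1 (Finset.mem_coe.mpr x.2)]
      exact Finset.mem_coe.mpr x.2
    · intro x hx
      refine ⟨bfun x hx, ?_, hb2 x hx⟩
      rw [Finset.mem_coe, ht₀, Finset.mem_image]
      exact ⟨⟨x, Finset.mem_coe.mp hx⟩, Finset.mem_attach _ _, rfl⟩
  set J₀ : Ideal R := Ideal.span (t₀ : Set R) with hJ₀
  have hJ₀I : J₀ ≤ I := Ideal.span_le.mpr ht₀I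
  have hJ₀fg : J₀.FG := ⟨t₀, rfl⟩
  have hlinK : ⇑(Algebra.linearMap R K) = ⇑(algebraMap R K) := rfl
  have htoK : toK R K J₀ = Submodule.span R (t : Set K) := by
    rw [toK, hJ₀, Ideal.span, Submodule.map_span, hlinK, himg]
  have hJext : J ≤ extendI J₀ T := by
    refine le_trans hJt ?_
    refine le_trans ?_ (Submodule.span_mono (Set.image_mono Ideal.subset_span))
    rw [himg]
  have hJ₀b : J₀ ≠ ⊥ := by
    intro hbot
    apply hJb
    refine le_bot_iff.mp (le_trans hJext ?_)
    rw [extendI, hbot]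
    have : (algebraMap R K '' ((⊥ : Ideal R) : Set R)) = {0} := by
      rw [Submodule.bot_coe, Set.image_singleton, map_zero]
    rw [this]
    exact le_of_eq (Submodule.span_zero_singleton (R := ↥T))
  -- Step 3: `(J₀ T)⁻¹ = T`
  have hextle : extendI J₀ T ≤ 1 := by
    refine Submodule.span_le.mpr ?_
    rintro _ ⟨a, _, rfl⟩
    exact aux_mem_oneT (T.algebraMap_mem a)
  have hdualExt : dual (extendI J₀ T) = 1 :=
    aux_dual_eq_one_of hextle (le_trans (aux_div_le_div hJext) hJdiv)
  -- Step 3.5: `(toK J₀)⁻¹ ⊆ T`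
  have hdT : ∀ x ∈ dual (toK R K J₀), x ∈ (1 : Submodule T K) := by
    intro x hx
    have hxT : x ∈ dual (extendI J₀ T) := by
      refine Submodule.mem_div_iff_forall_mul_mem.mpr fun y hy => ?_
      refine Submodule.span_induction (p := fun y _ => x * y ∈ (1 : Submodule T K))
        ?_ ?_ ?_ ?_ hy
      · rintro _ ⟨a, ha, rfl⟩
        refine aux_oneR_le_oneT ?_
        exact Submodule.mem_div_iff_forall_mul_mem.mp hx (algebraMap R K a) ⟨a, ha, rfl⟩
      · show x * 0 ∈ (1 : Submodule T K); rw [mul_zero]; exact zero_mem _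
      · intro a b _ _ ha hb; show x * (a + b) ∈ _; rw [mul_add]; exact add_mem ha hb
      · intro c y _ hy
        show x * (c • y) ∈ _
        have : x * (c • y) = c • (x * y) := by
          rw [Algebra.smul_def, Algebra.smul_def, mul_left_comm]
        rw [this]
        exact Submodule.smul_mem _ c hy
    rwa [hdualExt] at hxT
  -- Step 4: Kaplansky property gives `J₀^(N+1) ≤ C` with `u C ⊆ R`
  have hu'' : ∀ a : R, a ∈ (t₀ : Set R) → ∃ p : ℕ × R,
      0 < p.1 ∧ u * (algebraMap R K a) ^ p.1 = algebraMap R K p.2 := by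
    intro a ha
    obtain ⟨n, hn, r, hr⟩ := hu' a (ht₀I ha)
    exact ⟨(n, r), hn, hr⟩
  choose pf hp1 hp2 using hu''
  set C : Ideal R := Ideal.span {x : R | ∃ (a : R) (ha : a ∈ (t₀ : Set R)),
    x = a ^ (pf a ha).1} with hC
  have hrad : J₀ ≤ C.radical := by
    refine Ideal.span_le.mpr fun a ha => ?_
    exact ⟨(pf a ha).1, Ideal.subset_span ⟨a, ha, rfl⟩⟩
  obtain ⟨N, hN⟩ := Ideal.exists_pow_le_of_le_radical_of_fg hrad hJ₀fg
  have hNC : J₀ ^ (N + 1) ≤ C := le_trans (Ideal.pow_le_pow_right (Nat.le_succ N)) hN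
  have huC : ∀ y ∈ toK R K C, u * y ∈ (1 : Submodule R K) := by
    rintro _ ⟨c, hc, rfl⟩
    rw [hlinK]
    refine Submodule.span_induction
      (p := fun c _ => u * algebraMap R K c ∈ (1 : Submodule R K)) ?_ ?_ ?_ ?_ hc
    · rintro _ ⟨a, ha, rfl⟩
      show u * algebraMap R K (a ^ (pf a ha).1) ∈ _
      rw [map_pow, hp2 a ha]
      exact aux_mem_one_iff.mpr ⟨_, rfl⟩
    · show u * algebraMap R K 0 ∈ _; rw [map_zero, mul_zero]; exact zero_mem _
    · intro a b _ _ ha hb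
      show u * algebraMap R K (a + b) ∈ _
      rw [map_add, mul_add]; exact add_mem ha hb
    · intro r c _ hc
      show u * algebraMap R K (r • c) ∈ _
      have : u * algebraMap R K (r • c) = r • (u * algebraMap R K c) := by
        rw [smul_eq_mul, map_mul, Algebra.smul_def, mul_left_comm]
      rw [this]
      exact Submodule.smul_mem _ r hc
  -- Step 5: t-invertibility of `J₀` gives a finitely generated `B` with `dual (toK B) = 1`
  have hinv := hR J₀ hJ₀b hJ₀fg
  rw [IsTInvertible] at hinv
  obtain ⟨B', hB'b, hB'f, hB'le, hB'div⟩ := aux_exists_fg_of_tOp_eq_one hinv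
  have hmul_le_one : toK R K J₀ * dual (toK R K J₀) ≤ 1 := by
    refine Submodule.mul_le.mpr fun m hm n hn => ?_
    have := Submodule.mem_div_iff_forall_mul_mem.mp hn m hm
    rwa [mul_comm] at this
  have hB'one : B' ≤ 1 := le_trans hB'le hmul_le_one
  obtain ⟨sB, hsB⟩ := hB'f
  have hsB1 : ∀ x : K, x ∈ (sB : Set K) → ∃ r : R, algebraMap R K r = x := fun x hx =>
    aux_mem_one_iff.mp (hB'one (hsB ▸ Submodule.subset_span hx))
  choose bf hbf using hsB1
  set sB₀ : Finset R := sB.attach.image (fun x => bf x.1 (Finset.mem_coe.mpr x.2)) with hsB₀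
  have himgB : algebraMap R K '' (sB₀ : Set R) = (sB : Set K) := by
    apply Set.Subset.antisymm
    · rintro _ ⟨a, ha, rfl⟩
      rw [Finset.mem_coe, hsB₀, Finset.mem_image] at ha
      obtain ⟨x, _, rfl⟩ := ha
      rw [hbf x.1 (Finset.mem_coe.mpr x.2)]
      exact Finset.mem_coe.mpr x.2
    · intro x hx
      refine ⟨bf x hx, ?_, hbf x hx⟩
      rw [Finset.mem_coe, hsB₀, Finset.mem_image]
      exact ⟨⟨x, Finset.mem_coe.mp hx⟩, Finset.mem_attach _ _, rfl⟩
  set B : Ideal R := Ideal.span (sB₀ : Set R) with hB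
  have hBfg : B.FG := ⟨sB₀, rfl⟩
  have htoKB : toK R K B = B' := by
    rw [toK, hB, Ideal.span, Submodule.map_span, hlinK, himgB, hsB]
  have hdB : dual (toK R K B) = 1 := by
    rw [htoKB]
    exact aux_dual_eq_one_of hB'one hB'div
  -- Step 6: `u · toK (B^(N+1)) ⊆ T`
  have hDpow : ∀ m : ℕ, ∀ x ∈ (dual (toK R K J₀)) ^ (m + 1), x ∈ (1 : Submodule T K) := by
    intro m
    induction m with
    | zero => intro x hx; rw [pow_one] at hx; exact hdT x hx
    | succ n ih =>
      intro x hx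
      rw [pow_succ] at hx
      exact Submodule.mul_induction_on hx
        (fun a ha b hb => aux_oneT_mul (ih a ha) (hdT b hb))
        (fun a b ha hb => add_mem ha hb)
  have hkey : ∀ x ∈ toK R K (B ^ (N + 1)), u * x ∈ (1 : Submodule T K) := by
    have hBpow : toK R K (B ^ (N + 1)) ≤ toK R K C * (dual (toK R K J₀)) ^ (N + 1) := by
      rw [aux_toK_pow, htoKB]
      calc B' ^ (N + 1) ≤ (toK R K J₀ * dual (toK R K J₀)) ^ (N + 1) :=
            aux_pow_le_pow hB'le _
        _ = (toK R K J₀) ^ (N + 1) * (dual (toK R K J₀)) ^ (N + 1) := mul_pow _ _ _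
        _ ≤ toK R K C * (dual (toK R K J₀)) ^ (N + 1) := by
            refine mul_le_mul' ?_ le_rfl
            rw [← aux_toK_pow]
            exact Submodule.map_mono hNC
    intro x hx
    refine Submodule.mul_induction_on (hBpow hx)
      (fun m hm n hn => ?_) (fun a b ha hb => ?_)
    · rw [← mul_assoc]
      exact aux_oneT_mul (aux_oneR_le_oneT (huC m hm)) (hDpow N n hn)
    · rw [mul_add]; exact add_mem ha hb
  -- Steps 7–8: t-linkedness applied to `B^(N+1)` gives `u ∈ T`
  have hdBM : dual (toK R K (B ^ (N + 1))) = 1 := aux_dual_toK_pow hdB N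
  have hext := hTl (B ^ (N + 1)) (Submodule.FG.pow hBfg _) hdBM
  have humem : u ∈ dual (extendI (B ^ (N + 1)) T) := by
    refine Submodule.mem_div_iff_forall_mul_mem.mpr fun y hy => ?_
    refine Submodule.span_induction (p := fun y _ => u * y ∈ (1 : Submodule T K))
      ?_ ?_ ?_ ?_ hy
    · rintro _ ⟨a, ha, rfl⟩
      exact hkey _ ⟨a, ha, rfl⟩
    · show u * 0 ∈ (1 : Submodule T K); rw [mul_zero]; exact zero_mem _
    · intro a b _ _ ha hb; show u * (a + b) ∈ _; rw [mul_add]; exact add_mem ha hb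
    · intro c y _ hy
      show u * (c • y) ∈ _
      have : u * (c • y) = c • (u * y) := by
        rw [Algebra.smul_def, Algebra.smul_def, mul_left_comm]
      rw [this]
      exact Submodule.smul_mem _ c hy
  rw [hext] at humem
  exact aux_mem_T_of_oneT humem

end Statements

end

end PVMDPaper
end
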